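/- Let 𝓐 be a collection of non-trivial harmonic subsets of ℤ satisfying properties (P1)–(P5), and let G_𝓐 be the graph with vertex set I = ∪_{C∈𝓐} C and i ∼ j iff there exists A ∈ 𝓐 with i = av(A) and j ∈ A, or j = av(A) and i ∈ A. Then a vertex i of G_𝓐 is a non-leaf if and only if there exists A ∈ 𝓐 with i = av(A); moreover this A is unique and equals the closed neighborhood of i in G_𝓐. -/

import Mathlib

/-- `a` is the (integer) average of the finite set `A ⊆ ℤ` and belongs to `A`;
i.e. `A` is a harmonic subset with `av(A) = a`. -/
def avOf (A : Finset ℤ) (a : ℤ) : Prop :=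
  a ∈ A ∧ (A.card : ℤ) * a = ∑ k ∈ A, k

/-- The graph `G_𝓐` associated to a collection `𝓐` of harmonic subsets of `ℤ`:
vertices are the integers covered by `𝓐`, and `i ∼ j` iff some `A ∈ 𝓐` has
`av(A) = i` and `j ∈ A`, or `av(A) = j` and `i ∈ A`. -/
def Hgraph (𝓐 : Set (Finset ℤ)) : SimpleGraph {x : ℤ // ∃ A ∈ 𝓐, x ∈ A} :=
  SimpleGraph.fromRel (fun i j => ∃ A ∈ 𝓐, ∃ a : ℤ, avOf A a ∧ a = i.1 ∧ j.1 ∈ A)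

/-- Averages are unique. -/
lemma avOf_unique {A : Finset ℤ} {x y : ℤ} (hx : avOf A x) (hy : avOf A y) : x = y := by
  have hc : (0 : ℤ) < A.card := by exact_mod_cast Finset.card_pos.mpr ⟨x, hx.1⟩
  exact mul_left_cancel₀ (ne_of_gt hc) (hx.2.trans hy.2.symm)

/-- A harmonic set with at least 2 elements has two elements distinct from its average. -/
lemma avOf_two_others {A : Finset ℤ} {a : ℤ} (h : avOf A a) (h2 : 2 ≤ A.card) :
    ∃ b ∈ A, ∃ c ∈ A, b ≠ a ∧ c ≠ a ∧ b ≠ c := by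
  have hB : 1 < (A.erase a).card := by
    rcases lt_or_ge 1 (A.erase a).card with h' | h'
    · exact h'
    · exfalso
      have hcard : (A.erase a).card = A.card - 1 := Finset.card_erase_of_mem h.1
      have h1 : 1 ≤ (A.erase a).card := by omega
      have hc1 : (A.erase a).card = 1 := le_antisymm h' h1
      obtain ⟨b, hb⟩ := Finset.card_eq_one.mp hc1
      have hbA : b ∈ A.erase a := by rw [hb]; exact Finset.mem_singleton_self b
      have hbne : b ≠ a := Finset.ne_of_mem_erase hbA
      have hcard2 : A.card = 2 := by omega
      have hsum : ∑ k ∈ A, k = a + ∑ k ∈ A.erase a, k :=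
        (Finset.add_sum_erase A id h.1).symm
      rw [hb, Finset.sum_singleton] at hsum
      have h2' := h.2
      rw [hcard2, hsum] at h2'
      have : b = a := by push_cast at h2'; omega
      exact hbne this
  obtain ⟨b, hb, c, hc, hbc⟩ := Finset.one_lt_card.mp hB
  exact ⟨b, Finset.mem_of_mem_erase hb, c, Finset.mem_of_mem_erase hc,
    Finset.ne_of_mem_erase hb, Finset.ne_of_mem_erase hc, hbc⟩

/-- For a collection `𝓐` of non-trivial harmonic subsets of `ℤ` satisfying (P1)–(P5),
a vertex `i` of `G_𝓐` is a non-leaf iff `i` is the average of some `A ∈ 𝓐`; moreover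
this `A` is unique and equals the closed neighborhood of `i` in `G_𝓐`. -/
theorem Hgraph_nonleaf_iff_average (𝓐 : Set (Finset ℤ))
    (hA : ∀ A ∈ 𝓐, 2 ≤ A.card ∧ ∃ a : ℤ, avOf A a)
    (hP1 : ({x : ℤ | ∃ A ∈ 𝓐, x ∈ A}).OrdConnected)
    (hP2 : ∀ A ∈ 𝓐, ∀ B ∈ 𝓐, ∀ a : ℤ, avOf A a → avOf B a → A = B)
    (hP3 : ∀ A ∈ 𝓐, ∀ B ∈ 𝓐, A ≠ B → ∀ t : ℤ, t ∈ A → t ∈ B → ∃ C ∈ 𝓐, avOf C t)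
    (hP4 : ∀ A ∈ 𝓐, ∀ B ∈ 𝓐, ∀ a : ℤ, avOf A a → a ∈ B → ∃ b : ℤ, avOf B b ∧ b ∈ A)
    (hP5 : ∀ A ∈ 𝓐, ∀ B ∈ 𝓐,
      Relation.ReflTransGen (fun X Y => X ∈ 𝓐 ∧ Y ∈ 𝓐 ∧ ∃ a : ℤ, avOf X a ∧ a ∈ Y) A B) :
    ∀ i : {x : ℤ // ∃ A ∈ 𝓐, x ∈ A},
      ((¬ ∃! j, (Hgraph 𝓐).Adj i j) ↔ ∃ A ∈ 𝓐, avOf A i.1) ∧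
      (∀ A ∈ 𝓐, avOf A i.1 →
        (∀ B ∈ 𝓐, avOf B i.1 → B = A) ∧
        (∀ x : ℤ, x ∈ A ↔ (x = i.1 ∨
          ∃ h : ∃ C ∈ 𝓐, x ∈ C, (Hgraph 𝓐).Adj i ⟨x, h⟩))) := by
  intro i
  constructor
  · constructor
    · -- non-leaf → average
      intro hnl
      by_contra hno
      push_neg at hno
      apply hnl
      -- i is a leaf: it lies in a unique member A, and its only neighbor is av(A)
      obtain ⟨A, hAmem, hiA⟩ := i.2
      have huniqmem : ∀ B ∈ 𝓐, i.1 ∈ B → B = A := by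
        intro B hB hiB
        by_contra hne
        obtain ⟨C, hC, hav⟩ := hP3 B hB A hAmem hne i.1 hiB hiA
        exact hno C hC hav
      obtain ⟨a, ha⟩ := (hA A hAmem).2
      have hane : a ≠ i.1 := fun h => hno A hAmem (h ▸ ha)
      refine ⟨⟨a, A, hAmem, ha.1⟩, ?_, ?_⟩
      · refine ⟨?_, Or.inr ⟨A, hAmem, a, ha, rfl, hiA⟩⟩
        intro h
        exact hane (congrArg Subtype.val h).symm
      · rintro j ⟨hne, hrel | hrel⟩
        · obtain ⟨B, hB, b, hav', hbi, hjB⟩ := hrel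
          exact absurd (hbi ▸ hav') (hno B hB)
        · obtain ⟨B, hB, b, hav', hbj, hiB⟩ := hrel
          have hBA : B = A := huniqmem B hB hiB
          subst hBA
          exact Subtype.ext (hbj ▸ avOf_unique hav' ha)
    · -- average → non-leaf
      rintro ⟨A, hAmem, hav⟩ hex
      obtain ⟨b, hbA, c, hcA, hbne, hcne, hbc⟩ := avOf_two_others hav (hA A hAmem).1
      obtain ⟨j, _, huniq⟩ := hex
      have hb : (Hgraph 𝓐).Adj i ⟨b, A, hAmem, hbA⟩ :=
        ⟨fun h => hbne (congrArg Subtype.val h).symm,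
          Or.inl ⟨A, hAmem, i.1, hav, rfl, hbA⟩⟩
      have hc : (Hgraph 𝓐).Adj i ⟨c, A, hAmem, hcA⟩ :=
        ⟨fun h => hcne (congrArg Subtype.val h).symm,
          Or.inl ⟨A, hAmem, i.1, hav, rfl, hcA⟩⟩
      have := (huniq _ hb).trans (huniq _ hc).symm
      exact hbc (congrArg Subtype.val this)
  · intro A hAmem hav
    refine ⟨fun B hB havB => hP2 B hB A hAmem i.1 havB hav, fun x => ⟨?_, ?_⟩⟩
    · intro hx
      by_cases hxi : x = i.1
      · exact Or.inl hxi
      · exact Or.inr ⟨⟨A, hAmem, hx⟩,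
          fun h => hxi (congrArg Subtype.val h).symm,
          Or.inl ⟨A, hAmem, i.1, hav, rfl, hx⟩⟩
    · rintro (rfl | ⟨h, hne, hrel | hrel⟩)
      · exact hav.1
      · obtain ⟨B, hB, b, havb, hbi, hxB⟩ := hrel
        have hBA : B = A := hP2 B hB A hAmem i.1 (hbi ▸ havb) hav
        exact hBA ▸ hxB
      · obtain ⟨B, hB, b, havb, hbx, hiB⟩ := hrel
        obtain ⟨d, havd, hdA⟩ := hP4 A hAmem B hB i.1 hav hiB
        have hbx' : b = x := hbx
        subst hbx'
        exact (avOf_unique havd havb) ▸ hdA
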